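/- Let k, t, m, n be integers with 2 ≤ t ≤ k−1, 2 < m ≤ min{t+1, n−1} and n ≥ m + 2, and let V be a vector space over a field with dim V ≥ k + (n−1)(t−1) + 1. Then there exists a (k; k−t, k−t+1)-SPID S in V with |S| = n which is not a (k−t)-junta, contains a (k−t)-sunflower of maximal dimension with m petals, and satisfies dim⟨S⟩ = k + (n−1)(t−1) + 1. -/

import Mathlib

open Module

variable {F : Type*} [Field F] {V : Type*} [AddCommGroup V] [Module F V]
  [FiniteDimensional F V]

section Aux
open Submodule
variable (F : Type*) [Field F] {V : Type*} [AddCommGroup V] [Module F V]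
variable {D : ℕ} (f : Fin D → V)

lemma span_image_inter {F : Type*} [Field F] {V : Type*} [AddCommGroup V] [Module F V]
    {D : ℕ} {f : Fin D → V} (hf : LinearIndependent F f) (s u : Set (Fin D)) :
    span F (f '' s) ⊓ span F (f '' u) = span F (f '' (s ∩ u)) := by
  apply le_antisymm
  · rintro x ⟨hs, hu⟩
    have hdecomp : s = (s ∩ u) ∪ (s \ u) := by
      ext y; by_cases hy : y ∈ u <;> simp [hy]
    rw [hdecomp, Set.image_union, span_union] at hs
    obtain ⟨a, ha, b, hb, rfl⟩ := Submodule.mem_sup.mp hs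
    have hau : a ∈ span F (f '' u) :=
      span_mono (Set.image_mono Set.inter_subset_right) ha
    have hbu : b ∈ span F (f '' u) := by
      have : (a + b) - a ∈ span F (f '' u) := Submodule.sub_mem _ hu hau
      simpa using this
    have hdisj : Disjoint (span F (f '' (s \ u))) (span F (f '' u)) :=
      hf.disjoint_span_image (Set.disjoint_sdiff_left)
    have hb0 : b = 0 := Submodule.disjoint_def.mp hdisj b hb hbu
    simpa [hb0] using ha
  · exact le_inf (span_mono (Set.image_mono Set.inter_subset_left))
      (span_mono (Set.image_mono Set.inter_subset_right))

/-- span of the part of the family indexed by a `Finset ℕ`. -/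
noncomputable def sp (S : Finset ℕ) : Submodule F V :=
  span F (f '' {i : Fin D | (i : ℕ) ∈ S})

variable {F f}

lemma sp_inter (hf : LinearIndependent F f) (S T : Finset ℕ) :
    sp F f S ⊓ sp F f T = sp F f (S ∩ T) := by
  rw [sp, sp, sp, span_image_inter hf]
  congr 1
  ext i
  simp

lemma sp_union (S T : Finset ℕ) : sp F f (S ∪ T) = sp F f S ⊔ sp F f T := by
  rw [sp, sp, sp, ← span_union, ← Set.image_union]
  congr 1
  ext i
  simp [or_comm]

lemma sp_mono {S T : Finset ℕ} (h : S ⊆ T) : sp F f S ≤ sp F f T :=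
  span_mono (Set.image_mono fun i hi => h hi)

lemma sp_finrank (hf : LinearIndependent F f) {S : Finset ℕ}
    (hS : S ⊆ Finset.range D) : finrank F (sp F f S) = S.card := by
  classical
  have e : {i : Fin D | (i : ℕ) ∈ S} ≃ {x // x ∈ S} :=
    { toFun := fun i => ⟨(i : Fin D), i.2⟩
      invFun := fun x => ⟨⟨(x : ℕ), Finset.mem_range.mp (hS x.2)⟩, x.2⟩
      left_inv := fun i => by ext; rfl
      right_inv := fun x => by ext; rfl }
  have hli : LinearIndependent F (f ∘ (Subtype.val : {i : Fin D | (i : ℕ) ∈ S} → Fin D)) :=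
    hf.comp _ Subtype.val_injective
  have hrange : Set.range (f ∘ (Subtype.val : {i : Fin D | (i : ℕ) ∈ S} → Fin D))
      = f '' {i : Fin D | (i : ℕ) ∈ S} := by
    rw [Set.range_comp, Subtype.range_val]
  rw [sp, ← hrange, finrank_span_eq_card hli, Fintype.card_congr e, Fintype.card_coe]

lemma sp_biUnion {ι : Type*} [DecidableEq ι] (s : Finset ι) (g : ι → Finset ℕ) :
    sp F f (s.biUnion g) = s.sup (fun i => sp F f (g i)) := by
  classical
  induction s using Finset.induction with
  | empty => simp [sp]
  | insert _ _ h ih => rw [Finset.biUnion_insert, sp_union, Finset.sup_insert, ih]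

end Aux

lemma window_eq {t i j x : ℕ} (ht : 1 ≤ t) (h1 : i*t ≤ x) (h2 : x < i*t + t)
    (h3 : j*t ≤ x) (h4 : x < j*t + t) : i = j := by
  rcases lt_trichotomy i j with h | h | h
  · exfalso
    have := Nat.mul_le_mul (Nat.succ_le_of_lt h) (le_refl t)
    rw [Nat.succ_mul] at this
    omega
  · exact h
  · exfalso
    have := Nat.mul_le_mul (Nat.succ_le_of_lt h) (le_refl t)
    rw [Nat.succ_mul] at this
    omega

lemma Ico_cover (a w : ℕ) (c : ℕ) :
    Finset.Ico a (a + c*w) =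
      (Finset.range c).biUnion (fun i => Finset.Ico (a + i*w) (a + i*w + w)) := by
  induction c with
  | zero => simp
  | succ c ih =>
    rw [Finset.range_add_one, Finset.biUnion_insert, ← ih, Finset.union_comm,
      Finset.Ico_union_Ico_eq_Ico (by omega) (by omega)]
    congr 1
    rw [Nat.succ_mul]
    omega

open Module Submodule in

/-- The subspace `⟨π_1, …, π_j⟩` (1-based), i.e. the span of the `π i` with `(i : ℕ) < j`. -/
def pspan {n : ℕ} (π : Fin n → Submodule F V) (j : ℕ) : Submodule F V :=
  ⨆ i : Fin n, ⨆ _ : (i : ℕ) < j, π i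

/-- The 1-based difference sequence `δ_j = dim⟨π_1,…,π_j⟩ - dim⟨π_1,…,π_{j-1}⟩`. -/
noncomputable def delta {n : ℕ} (π : Fin n → Submodule F V) (j : ℕ) : ℕ :=
  finrank F ↥(pspan π j) - finrank F ↥(pspan π (j - 1))

/-- A `(k; ℓ_1, …, ℓ_v)`-SPID, where `L` is the set of prescribed intersection dimensions:
a family of pairwise distinct `k`-dimensional subspaces, any two distinct members meeting
in a dimension belonging to `L`, and every value of `L` being attained. -/
def IsSPID {n : ℕ} (k : ℕ) (L : Set ℕ) (π : Fin n → Submodule F V) : Prop :=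
  Function.Injective π ∧
  (∀ i, finrank F ↥(π i) = k) ∧
  (∀ i j, i ≠ j → finrank F ↥(π i ⊓ π j) ∈ L) ∧
  ∀ ℓ ∈ L, ∃ i j, i ≠ j ∧ finrank F ↥(π i ⊓ π j) = ℓ

/-- An `ℓ`-junta: all members pass through a common `ℓ`-dimensional subspace. -/
def IsJunta {n : ℕ} (ℓ : ℕ) (π : Fin n → Submodule F V) : Prop :=
  ∃ C : Submodule F V, finrank F ↥C = ℓ ∧ ∀ i, C ≤ π i

/-- `S` contains an `ℓ`-sunflower of maximal dimension with `p` petals (all petals being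
`k`-dimensional): `p` members of `S` pairwise meeting exactly in a common `ℓ`-dimensional
center and spanning a subspace of dimension `ℓ + p(k - ℓ)`. -/
def HasMaxSunflower (k ℓ p : ℕ) (S : Set (Submodule F V)) : Prop :=
  ∃ A : Finset (Submodule F V), ↑A ⊆ S ∧ A.card = p ∧
    ∃ C : Submodule F V, finrank F ↥C = ℓ ∧
      (∀ W ∈ A, ∀ W' ∈ A, W ≠ W' → W ⊓ W' = C) ∧
      finrank F ↥(A.sup id) = ℓ + p * (k - ℓ)

set_option maxHeartbeats 1000000 in
/-- Existence of Class I examples: a non-junta `(k; k-t, k-t+1)`-SPID with `n` members,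
containing a `(k-t)`-sunflower of maximal dimension with `m` petals, and spanning a
subspace of dimension `k + (n-1)(t-1) + 1`. -/
theorem statement10 {n k t m : ℕ} (ht2 : 2 ≤ t) (htk : t + 1 ≤ k)
    (hm1 : 2 < m) (hm2 : m ≤ t + 1) (hm3 : m ≤ n - 1) (hn : m + 2 ≤ n)
    (hdimV : k + (n - 1) * (t - 1) + 1 ≤ finrank F V) :
    ∃ π : Fin n → Submodule F V,
      IsSPID k {k - t, k - t + 1} π ∧ ¬ IsJunta (k - t) π ∧
      HasMaxSunflower k (k - t) m (Set.range π) ∧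
      finrank F ↥(⨆ i, π i) = k + (n - 1) * (t - 1) + 1 := by
  classical
  obtain ⟨D, hDdef⟩ : ∃ D, k + (n - 1) * (t - 1) + 1 = D := ⟨_, rfl⟩
  rw [hDdef] at hdimV
  obtain ⟨ℓ, hℓdef⟩ : ∃ ℓ, k - t = ℓ := ⟨_, rfl⟩
  obtain ⟨f, hf⟩ := exists_linearIndependent_of_le_finrank hdimV
  have hℓ1 : 1 ≤ ℓ := by omega
  have hkℓ : k = ℓ + t := by omega
  -- product identities / inequalities (products treated as atoms by omega)
  have e1 : (n-1)*(t-1) = m*(t-1) + (n-1-m)*(t-1) := by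
    rw [← Nat.add_mul]; congr 1; omega
  have e2 : m*(t-1) + m = m*t := by
    rw [← Nat.mul_succ]; congr 1; omega
  have e3 : t ≤ m*t := Nat.le_mul_of_pos_left t (by omega)
  have e4 : ∀ i, i < m → i*t + t ≤ m*t := by
    intro i hi
    have := Nat.mul_le_mul (Nat.succ_le_of_lt hi) (le_refl t)
    rw [Nat.succ_mul] at this; omega
  have e5 : ∀ i j : ℕ, i < j → i*t + t ≤ j*t := by
    intro i j hij
    have := Nat.mul_le_mul (Nat.succ_le_of_lt hij) (le_refl t)
    rw [Nat.succ_mul] at this; omega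
  have e6 : ∀ j, j < n-1-m → j*(t-1) + (t-1) ≤ (n-1-m)*(t-1) := by
    intro j hj
    have := Nat.mul_le_mul (Nat.succ_le_of_lt hj) (le_refl (t-1))
    rw [Nat.succ_mul] at this; omega
  have e7 : ∀ j j' : ℕ, j < j' → j*(t-1) + (t-1) ≤ j'*(t-1) := by
    intro j j' h
    have := Nat.mul_le_mul (Nat.succ_le_of_lt h) (le_refl (t-1))
    rw [Nat.succ_mul] at this; omega
  have etℓ : ∀ i : ℕ, 1 ≤ i → t ≤ i*t := fun i hi => Nat.le_mul_of_pos_left t (by omega)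
  have hBD : ℓ + m*t + (n-1-m)*(t-1) + (t+1-m) = D := by omega
  -- index sets
  obtain ⟨Q, hQdef⟩ : ∃ Q : Finset ℕ,
      insert ℓ ((Finset.Ico 1 m).image (fun i => ℓ + i*t + 1)) = Q := ⟨_, rfl⟩
  obtain ⟨Idx, hIdxdef⟩ : ∃ Idx : ℕ → Finset ℕ, (fun i =>
    if i < m then Finset.Ico 0 ℓ ∪ Finset.Ico (ℓ + i*t) (ℓ + i*t + t)
    else if i < n-1 then Finset.Ico 0 (ℓ+1) ∪
      Finset.Ico (ℓ + m*t + (i-m)*(t-1)) (ℓ + m*t + (i-m)*(t-1) + (t-1))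
    else Finset.Ico 0 (ℓ-1) ∪ Q ∪ Finset.Ico (ℓ + m*t + (n-1-m)*(t-1)) D) = Idx := ⟨_, rfl⟩
  have hQmem : ∀ x, x ∈ Q ↔ x = ℓ ∨ ∃ i, 1 ≤ i ∧ i < m ∧ x = ℓ + i*t + 1 := by
    intro x
    simp only [← hQdef, Finset.mem_insert, Finset.mem_image, Finset.mem_Ico]
    constructor
    · rintro (h | ⟨i, ⟨h1, h2⟩, h3⟩)
      · exact Or.inl h
      · exact Or.inr ⟨i, h1, h2, h3.symm⟩
    · rintro (h | ⟨i, h1, h2, h3⟩)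
      · exact Or.inl h
      · exact Or.inr ⟨i, ⟨h1, h2⟩, h3.symm⟩
  -- coarse bound on Q elements
  have hQco : ∀ x ∈ Q, x = ℓ ∨ (ℓ + t + 1 ≤ x ∧ x < ℓ + m*t) := by
    intro x hx
    rcases (hQmem x).mp hx with h | ⟨i, hi1, hi2, rfl⟩
    · exact Or.inl h
    · have h1 := etℓ i hi1
      have h2 := e4 i hi2
      right; omega
  have hQcard : Q.card = m := by
    have h1 : ℓ ∉ (Finset.Ico 1 m).image (fun i => ℓ + i*t + 1) := by
      simp only [Finset.mem_image, Finset.mem_Ico]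
      rintro ⟨i, ⟨hi1, hi2⟩, h⟩
      have := etℓ i hi1; omega
    have h2 : ((Finset.Ico 1 m).image (fun i => ℓ + i*t + 1)).card = m - 1 := by
      rw [Finset.card_image_of_injOn, Nat.card_Ico]
      intro a _ b _ hab
      simp only at hab
      have h3 : a * t = b * t := by omega
      exact Nat.eq_of_mul_eq_mul_right (by omega) h3
    rw [← hQdef, Finset.card_insert_of_notMem h1, h2]; omega
  have hsub : ∀ i, Idx i ⊆ Finset.range D := by
    intro i x hx
    simp only [← hIdxdef] at hx
    rw [Finset.mem_range]
    split_ifs at hx with h1 h2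
    · simp only [Finset.mem_union, Finset.mem_Ico] at hx
      have := e4 i h1
      omega
    · simp only [Finset.mem_union, Finset.mem_Ico] at hx
      have := e6 (i-m) (by omega)
      omega
    · simp only [Finset.mem_union, Finset.mem_Ico] at hx
      rcases hx with (hx | hx) | hx
      · omega
      · rcases hQco x hx with h | h <;> omega
      · omega
  have hcard : ∀ i, i < n → (Idx i).card = k := by
    intro i hi
    simp only [← hIdxdef]
    split_ifs with h1 h2
    · rw [Finset.card_union_of_disjoint, Nat.card_Ico, Nat.card_Ico]
      · omega
      · rw [Finset.disjoint_left]
        intro x hx hx'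
        simp only [Finset.mem_Ico] at hx hx'
        omega
    · rw [Finset.card_union_of_disjoint, Nat.card_Ico, Nat.card_Ico]
      · omega
      · rw [Finset.disjoint_left]
        intro x hx hx'
        simp only [Finset.mem_Ico] at hx hx'
        omega
    · rw [Finset.card_union_of_disjoint, Finset.card_union_of_disjoint, Nat.card_Ico,
        Nat.card_Ico, hQcard]
      · omega
      · rw [Finset.disjoint_left]
        intro x hx hx'
        simp only [Finset.mem_Ico] at hx
        rcases hQco x hx' with h | h <;> omega
      · rw [Finset.disjoint_left]
        intro x hx hx'
        simp only [Finset.mem_union, Finset.mem_Ico] at hx hx'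
        rcases hx with hx | hx
        · omega
        · rcases hQco x hx with h | h <;> omega
  have hsun : ∀ i j, i < m → j < m → i ≠ j → Idx i ∩ Idx j = Finset.Ico 0 ℓ := by
    intro i j hi hj hij
    simp only [← hIdxdef, if_pos hi, if_pos hj]
    ext x
    simp only [Finset.mem_inter, Finset.mem_union, Finset.mem_Ico]
    have h1 : i*t + t ≤ j*t ∨ j*t + t ≤ i*t := by
      rcases Nat.lt_or_ge i j with h | h
      · exact Or.inl (e5 _ _ h)
      · exact Or.inr (e5 _ _ (by omega))
    omega
  have h0mid : ∀ j, m ≤ j → j < n-1 → Idx 0 ∩ Idx j = Finset.Ico 0 (ℓ+1) := by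
    intro j hj1 hj2
    simp only [← hIdxdef, if_pos (show 0 < m by omega), if_neg (show ¬ j < m by omega),
      if_pos hj2]
    ext x
    simp only [Finset.mem_inter, Finset.mem_union, Finset.mem_Ico]
    have h1 : (0:ℕ)*t = 0 := by ring
    have h2 : 0 ≤ (j-m)*(t-1) := Nat.zero_le _
    omega
  -- the remaining intersection computations
  have hmidmid : ∀ i j, m ≤ i → i < j → j < n-1 →
      Idx i ∩ Idx j = Finset.Ico 0 (ℓ+1) := by
    intro i j hi hij hj
    simp only [← hIdxdef, if_neg (show ¬ i < m by omega), if_pos (show i < n-1 by omega),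
      if_neg (show ¬ j < m by omega), if_pos hj]
    ext x
    simp only [Finset.mem_inter, Finset.mem_union, Finset.mem_Ico]
    have h1 := e7 (i-m) (j-m) (by omega)
    omega
  have hpetmid : ∀ i j, 1 ≤ i → i < m → m ≤ j → j < n-1 →
      Idx i ∩ Idx j = Finset.Ico 0 ℓ := by
    intro i j hi1 hi2 hj1 hj2
    simp only [← hIdxdef, if_pos hi2, if_neg (show ¬ j < m by omega), if_pos hj2]
    ext x
    simp only [Finset.mem_inter, Finset.mem_union, Finset.mem_Ico]
    have h1 := etℓ i hi1
    have h2 := e4 i hi2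
    have h3 : 0 ≤ (j-m)*(t-1) := Nat.zero_le _
    omega
  have hpet0last : Idx 0 ∩ Idx (n-1) = Finset.Ico 0 (ℓ-1) ∪ {ℓ} := by
    simp only [← hIdxdef, if_pos (show 0 < m by omega), if_neg (show ¬ n-1 < m by omega),
      if_neg (show ¬ n-1 < n-1 by omega)]
    ext x
    simp only [Finset.mem_inter, Finset.mem_union, Finset.mem_Ico, Finset.mem_singleton]
    have h1 : (0:ℕ)*t = 0 := by ring
    constructor
    · rintro ⟨hx1, (hx2 | hx2) | hx2⟩
      · omega
      · rcases hQco x hx2 with h | h <;> omega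
      · omega
    · rintro (hx | hx)
      · refine ⟨Or.inl (by omega), Or.inl (Or.inl (by omega))⟩
      · exact ⟨Or.inr (by omega), Or.inl (Or.inr ((hQmem x).mpr (Or.inl hx)))⟩
  have hpetlast : ∀ i, 1 ≤ i → i < m →
      Idx i ∩ Idx (n-1) = Finset.Ico 0 (ℓ-1) ∪ {ℓ + i*t + 1} := by
    intro i hi1 hi2
    simp only [← hIdxdef, if_pos hi2, if_neg (show ¬ n-1 < m by omega),
      if_neg (show ¬ n-1 < n-1 by omega)]
    ext x
    simp only [Finset.mem_inter, Finset.mem_union, Finset.mem_Ico, Finset.mem_singleton]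
    have h1 := etℓ i hi1
    have h2 := e4 i hi2
    constructor
    · rintro ⟨hx1, (hx2 | hx2) | hx2⟩
      · omega
      · rcases (hQmem x).mp hx2 with h | ⟨j, hj1, hj2, rfl⟩
        · omega
        · have h3 : j = i := by
            rcases lt_trichotomy j i with h | h | h
            · have := e5 _ _ h; omega
            · exact h
            · have := e5 _ _ h; omega
          subst h3
          exact Or.inr rfl
      · omega
    · rintro (hx | rfl)
      · exact ⟨Or.inl (by omega), Or.inl (Or.inl (by omega))⟩
      · refine ⟨Or.inr (by omega),
          Or.inl (Or.inr ((hQmem _).mpr (Or.inr ⟨i, hi1, hi2, rfl⟩)))⟩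
  have hmidlast : ∀ i, m ≤ i → i < n-1 →
      Idx i ∩ Idx (n-1) = Finset.Ico 0 (ℓ-1) ∪ {ℓ} := by
    intro i hi1 hi2
    simp only [← hIdxdef, if_neg (show ¬ i < m by omega), if_pos hi2,
      if_neg (show ¬ n-1 < m by omega), if_neg (show ¬ n-1 < n-1 by omega)]
    ext x
    simp only [Finset.mem_inter, Finset.mem_union, Finset.mem_Ico, Finset.mem_singleton]
    have h1 := e6 (i-m) (by omega)
    constructor
    · rintro ⟨hx1, (hx2 | hx2) | hx2⟩
      · omega
      · rcases hQco x hx2 with h | h <;> omega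
      · omega
    · rintro (hx | hx)
      · exact ⟨Or.inl (by omega), Or.inl (Or.inl (by omega))⟩
      · exact ⟨Or.inl (by omega), Or.inl (Or.inr ((hQmem x).mpr (Or.inl hx)))⟩
  have hIC : ∀ i j, i < j → j < n →
      (Idx i ∩ Idx j).card = ℓ ∨ (Idx i ∩ Idx j).card = ℓ + 1 := by
    intro i j hij hjn
    have hcs : ∀ a : ℕ, (Finset.Ico 0 (ℓ-1) ∪ {a}).card = ℓ - 1 + 1 → a ∉ Finset.Ico 0 (ℓ-1) →
        True := fun _ _ _ => trivial
    have hcu : ∀ a : ℕ, ℓ - 1 ≤ a → (Finset.Ico 0 (ℓ-1) ∪ {a}).card = ℓ := by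
      intro a ha
      rw [Finset.card_union_of_disjoint, Nat.card_Ico, Finset.card_singleton]
      · omega
      · rw [Finset.disjoint_left]
        intro x hx hx'
        simp only [Finset.mem_Ico] at hx
        simp only [Finset.mem_singleton] at hx'
        omega
    rcases Nat.lt_or_ge i m with him | him
    · rcases Nat.lt_or_ge j m with hjm | hjm
      · left; rw [hsun i j him hjm (by omega), Nat.card_Ico]; omega
      · rcases Nat.lt_or_ge j (n-1) with hj1 | hj1
        · rcases Nat.eq_zero_or_pos i with rfl | hi0
          · right; rw [h0mid j hjm hj1, Nat.card_Ico]; omega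
          · left; rw [hpetmid i j hi0 him hjm hj1, Nat.card_Ico]; omega
        · have hj : j = n - 1 := by omega
          subst hj
          rcases Nat.eq_zero_or_pos i with rfl | hi0
          · left; rw [hpet0last]; exact hcu ℓ (by omega)
          · left; rw [hpetlast i hi0 him]; exact hcu _ (by omega)
    · rcases Nat.lt_or_ge j (n-1) with hj1 | hj1
      · right; rw [hmidmid i j him hij hj1, Nat.card_Ico]; omega
      · have hj : j = n - 1 := by omega
        subst hj
        left; rw [hmidlast i him (by omega)]; exact hcu ℓ (by omega)
  have hlastC : Finset.Ico 0 ℓ ∩ Idx (n-1) = Finset.Ico 0 (ℓ-1) := by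
    simp only [← hIdxdef, if_neg (show ¬ n-1 < m by omega), if_neg (show ¬ n-1 < n-1 by omega)]
    ext x
    simp only [Finset.mem_inter, Finset.mem_union, Finset.mem_Ico]
    constructor
    · rintro ⟨hx1, (hx2 | hx2) | hx2⟩
      · omega
      · rcases hQco x hx2 with h | h <;> omega
      · omega
    · intro hx
      exact ⟨by omega, Or.inl (Or.inl (by omega))⟩
  have hcovm : ∀ x, ℓ ≤ x → x < ℓ + m*t → ∃ i, i < m ∧ x ∈ Finset.Ico (ℓ + i*t) (ℓ + i*t + t) := by
    intro x h1 h2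
    have hc := Ico_cover ℓ t m
    have hx : x ∈ Finset.Ico ℓ (ℓ + m*t) := by simp only [Finset.mem_Ico]; omega
    rw [hc] at hx
    obtain ⟨i, hi, hxi⟩ := Finset.mem_biUnion.mp hx
    exact ⟨i, Finset.mem_range.mp hi, hxi⟩
  have hunion : Finset.univ.biUnion (fun i : Fin n => Idx ↑i) = Finset.range D := by
    apply Finset.Subset.antisymm
    · intro x hx
      obtain ⟨i, _, hxi⟩ := Finset.mem_biUnion.mp hx
      exact hsub _ hxi
    · intro x hx
      rw [Finset.mem_range] at hx
      rw [Finset.mem_biUnion]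
      rcases Nat.lt_or_ge x ℓ with h | h
      · refine ⟨⟨0, by omega⟩, Finset.mem_univ _, ?_⟩
        simp only [← hIdxdef, if_pos (show 0 < m by omega)]
        exact Finset.mem_union_left _ (by simp only [Finset.mem_Ico]; omega)
      · rcases Nat.lt_or_ge x (ℓ + m*t) with h2 | h2
        · obtain ⟨i, hi, hxi⟩ := hcovm x h h2
          refine ⟨⟨i, by omega⟩, Finset.mem_univ _, ?_⟩
          simp only [← hIdxdef, if_pos hi]
          exact Finset.mem_union_right _ hxi
        · rcases Nat.lt_or_ge x (ℓ + m*t + (n-1-m)*(t-1)) with h3 | h3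
          · have hc := Ico_cover (ℓ+m*t) (t-1) (n-1-m)
            have hx2 : x ∈ Finset.Ico (ℓ+m*t) (ℓ+m*t + (n-1-m)*(t-1)) := by
              simp only [Finset.mem_Ico]; omega
            rw [hc] at hx2
            obtain ⟨j, hj, hxj⟩ := Finset.mem_biUnion.mp hx2
            rw [Finset.mem_range] at hj
            refine ⟨⟨m + j, by omega⟩, Finset.mem_univ _, ?_⟩
            simp only [← hIdxdef, if_neg (show ¬ m + j < m by omega),
              if_pos (show m + j < n - 1 by omega)]
            have hjj : m + j - m = j := by omega
            rw [hjj]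
            exact Finset.mem_union_right _ hxj
          · refine ⟨⟨n-1, by omega⟩, Finset.mem_univ _, ?_⟩
            simp only [← hIdxdef, if_neg (show ¬ n-1 < m by omega),
              if_neg (show ¬ n-1 < n-1 by omega)]
            exact Finset.mem_union_right _ (by simp only [Finset.mem_Ico]; omega)
  have hattach : ∀ x ∈ Finset.range m, x < n := by
    intro x hx; rw [Finset.mem_range] at hx; omega
  obtain ⟨sA, hsAdef⟩ : ∃ sA : Finset (Fin n), (Finset.range m).attachFin hattach = sA :=
    ⟨_, rfl⟩
  have hsAmem : ∀ i : Fin n, i ∈ sA ↔ (i : ℕ) < m := by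
    intro i
    rw [← hsAdef, Finset.mem_attachFin, Finset.mem_range]
  have hsunU : sA.biUnion (fun i : Fin n => Idx ↑i) = Finset.Ico 0 (ℓ + m*t) := by
    apply Finset.Subset.antisymm
    · intro x hx
      obtain ⟨i, hi, hxi⟩ := Finset.mem_biUnion.mp hx
      rw [hsAmem] at hi
      simp only [← hIdxdef, if_pos hi, Finset.mem_union, Finset.mem_Ico] at hxi
      have := e4 ↑i hi
      simp only [Finset.mem_Ico]
      omega
    · intro x hx
      simp only [Finset.mem_Ico] at hx
      rw [Finset.mem_biUnion]
      rcases Nat.lt_or_ge x ℓ with h | h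
      · refine ⟨⟨0, by omega⟩, (hsAmem _).mpr (show (0:ℕ) < m by omega), ?_⟩
        simp only [← hIdxdef, if_pos (show 0 < m by omega)]
        exact Finset.mem_union_left _ (by simp only [Finset.mem_Ico]; omega)
      · obtain ⟨i, hi, hxi⟩ := hcovm x h (by omega)
        refine ⟨⟨i, by omega⟩, (hsAmem _).mpr (show i < m from hi), ?_⟩
        simp only [← hIdxdef, if_pos hi]
        exact Finset.mem_union_right _ hxi
  -- the subspaces
  obtain ⟨π, hπdef⟩ : ∃ π : Fin n → Submodule F V,
      (fun i : Fin n => sp F f (Idx ↑i)) = π := ⟨_, rfl⟩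
  have hπ : ∀ i : Fin n, π i = sp F f (Idx ↑i) := fun i => by rw [← hπdef]
  have hπrank : ∀ i : Fin n, finrank F ↥(π i) = k := by
    intro i
    rw [hπ, sp_finrank hf (hsub _), hcard _ i.2]
  have hπint : ∀ i j : Fin n, finrank F ↥(π i ⊓ π j) = (Idx ↑i ∩ Idx ↑j).card := by
    intro i j
    rw [hπ, hπ, sp_inter hf, sp_finrank hf]
    intro x hx
    exact hsub ↑i (Finset.mem_of_mem_inter_left hx)
  have hICall : ∀ i j : Fin n, i ≠ j →
      (Idx ↑i ∩ Idx ↑j).card = ℓ ∨ (Idx ↑i ∩ Idx ↑j).card = ℓ + 1 := by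
    intro i j hij
    have hv : (i:ℕ) ≠ (j:ℕ) := fun h => hij (Fin.ext h)
    rcases Nat.lt_or_ge (i:ℕ) (j:ℕ) with h | h
    · exact hIC _ _ h j.2
    · rw [Finset.inter_comm]
      exact hIC _ _ (by omega) i.2
  have hπinj : Function.Injective π := by
    intro i j hij
    by_contra hne
    have h1 := hπint i j
    rw [hij, inf_idem] at h1
    have h2 := hπrank j
    rcases hICall i j hne with h | h <;> omega
  have hIcoSub : ∀ a : ℕ, a ≤ ℓ + m*t → Finset.Ico 0 a ⊆ Finset.range D := by
    intro a ha x hx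
    simp only [Finset.mem_Ico] at hx
    rw [Finset.mem_range]
    omega
  have rC : finrank F ↥(sp F f (Finset.Ico 0 ℓ)) = ℓ := by
    rw [sp_finrank hf (hIcoSub ℓ (by omega)), Nat.card_Ico]
    omega
  rw [hℓdef, hDdef]
  refine ⟨π, ⟨hπinj, hπrank, ?_, ?_⟩, ?_, ?_, ?_⟩
  · -- intersection dimensions lie in {ℓ, ℓ+1}
    intro i j hij
    rw [hπint i j]
    rcases hICall i j hij with h | h
    · rw [h]; exact Set.mem_insert _ _
    · rw [h]; exact Set.mem_insert_iff.mpr (Or.inr rfl)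
  · -- both values attained
    intro ℓ' hℓ'
    simp only [Set.mem_insert_iff, Set.mem_singleton_iff] at hℓ'
    rcases hℓ' with h | h
    · refine ⟨⟨0, by omega⟩, ⟨1, by omega⟩, ?_, ?_⟩
      · intro hh
        exact (by omega : (0:ℕ) ≠ 1) (congrArg Fin.val hh)
      · rw [hπint, h]
        show (Idx 0 ∩ Idx 1).card = ℓ
        rw [hsun 0 1 (by omega) (by omega) (by omega), Nat.card_Ico]
        omega
    · refine ⟨⟨0, by omega⟩, ⟨m, by omega⟩, ?_, ?_⟩
      · intro hh
        exact (by omega : (0:ℕ) ≠ m) (congrArg Fin.val hh)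
      · rw [hπint, h]
        show (Idx 0 ∩ Idx m).card = ℓ + 1
        rw [h0mid m le_rfl (by omega), Nat.card_Ico]
        omega
  · -- not a junta
    rintro ⟨C, hCrank, hCle⟩
    have h01 : C ≤ sp F f (Finset.Ico 0 ℓ) := by
      have h2 := le_inf (hCle ⟨0, by omega⟩) (hCle ⟨1, by omega⟩)
      rw [hπ, hπ, sp_inter hf] at h2
      have he : Idx ↑(⟨0, by omega⟩ : Fin n) ∩ Idx ↑(⟨1, by omega⟩ : Fin n)
          = Finset.Ico 0 ℓ := hsun 0 1 (by omega) (by omega) (by omega)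
      rwa [he] at h2
    have hCeq : C = sp F f (Finset.Ico 0 ℓ) := by
      apply Submodule.eq_of_le_of_finrank_le h01
      rw [rC, hCrank]
    have hle2 : sp F f (Finset.Ico 0 ℓ) ≤ sp F f (Idx (n-1)) := by
      rw [← hCeq]
      have h2 := hCle ⟨n-1, by omega⟩
      rwa [hπ] at h2
    have h3 : sp F f (Finset.Ico 0 ℓ) = sp F f (Finset.Ico 0 (ℓ-1)) := by
      rw [← hlastC, ← sp_inter hf]
      exact (inf_eq_left.mpr hle2).symm
    have r2 := sp_finrank hf (hIcoSub (ℓ-1) (by omega))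
    rw [h3, r2] at rC
    rw [Nat.card_Ico] at rC
    omega
  · -- the sunflower
    refine ⟨sA.image π, ?_, ?_, sp F f (Finset.Ico 0 ℓ), rC, ?_, ?_⟩
    · intro W hW
      simp only [Finset.coe_image, Set.mem_image, Finset.mem_coe] at hW
      obtain ⟨i, _, rfl⟩ := hW
      exact ⟨i, rfl⟩
    · rw [Finset.card_image_of_injective _ hπinj, ← hsAdef, Finset.card_attachFin,
        Finset.card_range]
    · intro W hW W' hW' hne
      simp only [Finset.mem_image] at hW hW'
      obtain ⟨i, hi, rfl⟩ := hW
      obtain ⟨j, hj, rfl⟩ := hW'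
      have hij : (i:ℕ) ≠ (j:ℕ) := by
        intro h
        exact hne (by rw [Fin.ext h])
      rw [hπ, hπ, sp_inter hf, hsun ↑i ↑j ((hsAmem i).mp hi) ((hsAmem j).mp hj) hij]
    · rw [Finset.sup_image]
      have hcomp : (id ∘ π) = (fun i : Fin n => sp F f (Idx ↑i)) := by
        funext i
        simp [hπ i]
      rw [hcomp, ← sp_biUnion, hsunU,
        sp_finrank hf (by
          intro x hx
          simp only [Finset.mem_Ico] at hx
          rw [Finset.mem_range]
          omega), Nat.card_Ico]
      have hkt : k - ℓ = t := by omega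
      rw [hkt]
      omega
  · -- total dimension
    have htot : (⨆ i, π i) = sp F f (Finset.range D) := by
      rw [← hunion, sp_biUnion]
      have h1 : Finset.univ.sup (fun i : Fin n => sp F f (Idx ↑i)) = Finset.univ.sup π := by
        rw [hπdef]
      rw [h1, Finset.sup_eq_iSup]
      simp
    rw [htot, sp_finrank hf (Finset.Subset.refl _), Finset.card_range]
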